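/- Let f be a piecewise λ-contraction on a compact metric space X whose open balls are connected. If Ω(f) ∩ S(f) = ∅, then f is asymptotically periodic on the set Z(f) of regular points: ω(f, Z(f)) is a finite union of periodic orbits of f. -/

import Mathlib

/-- Composition `φ^α` along the word `α`. -/
def compIFS {X : Type*} {N : ℕ} (φ : Fin N → X → X) (α : ℕ → Fin N) : ℕ → X → X
  | 0 => id
  | n + 1 => φ (α n) ∘ compIFS φ α n

/-- `Ω(f)` with base point `x₀`. -/
def OmegaIFS {X : Type*} [TopologicalSpace X] {N : ℕ}
    (f : X → X) (A : Fin N → Set X) (φ : Fin N → X → X) (x₀ : X) : Set X :=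
  ⋂ m : ℕ, closure (⋃ n ∈ Set.Ici m,
    ⋃ α ∈ {α : ℕ → Fin N | ∃ x, ∀ j < n, f^[j] x ∈ A (α j)},
      ({compIFS φ α n x₀} : Set X))

/-- The ω-limit set of `x` under `f`. -/
def omegaSet {X : Type*} [TopologicalSpace X] (f : X → X) (x : X) : Set X :=
  ⋂ m : ℕ, closure (⋃ n ∈ Set.Ici m, ({f^[n] x} : Set X))

/-- `γ` is a periodic orbit of `f`. -/
def IsPeriodicOrbit {X : Type*} (f : X → X) (γ : Set X) : Prop :=
  ∃ (x : X) (p : ℕ), 0 < p ∧ f^[p] x = x ∧ γ = {y | ∃ n : ℕ, f^[n] x = y}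

namespace PCAux

open Metric Set Filter Function

variable {X : Type*} [MetricSpace X] {N : ℕ} {f : X → X} {A : Fin N → Set X}
  {φ : Fin N → X → X} {lam : NNReal}

lemma dist_compIFS_le (hlip : ∀ i, LipschitzWith lam (φ i)) (α : ℕ → Fin N) :
    ∀ (n : ℕ) (a b : X),
      dist (compIFS φ α n a) (compIFS φ α n b) ≤ (lam : ℝ) ^ n * dist a b := by
  intro n
  induction n with
  | zero => intro a b; simp [compIFS]
  | succ n ih =>
    intro a b
    calc dist (compIFS φ α (n+1) a) (compIFS φ α (n+1) b)
        = dist (φ (α n) (compIFS φ α n a)) (φ (α n) (compIFS φ α n b)) := rfl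
      _ ≤ lam * dist (compIFS φ α n a) (compIFS φ α n b) := (hlip (α n)).dist_le_mul _ _
      _ ≤ lam * ((lam : ℝ) ^ n * dist a b) :=
          mul_le_mul_of_nonneg_left (ih a b) lam.coe_nonneg
      _ = (lam : ℝ) ^ (n+1) * dist a b := by ring

lemma iterate_eq_compIFS (heq : ∀ i, Set.EqOn f (φ i) (A i)) {α : ℕ → Fin N} {x : X}
    (hα : ∀ j, f^[j] x ∈ A (α j)) : ∀ n, f^[n] x = compIFS φ α n x := by
  intro n
  induction n with
  | zero => simp [compIFS]
  | succ n ih =>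
    have h1 : f^[n+1] x = f (f^[n] x) := Function.iterate_succ_apply' f n x
    have h2 : compIFS φ α (n+1) x = φ (α n) (compIFS φ α n x) := rfl
    rw [h1, heq (α n) (hα n), h2, ih]

end PCAux

open Metric Set Filter Function PCAux

/-- if `Ω(f) ∩ S(f) = ∅`, then `f` is asymptotically periodic on the set
`Z(f)` of regular points: `ω(f, Z(f))` is a finite union of periodic orbits of `f`. -/
theorem asymptotically_periodic_on_regular_points
    {X : Type*} [MetricSpace X] [CompactSpace X]
    (hball : ∀ (x : X) (r : ℝ), IsPreconnected (Metric.ball x r))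
    (f : X → X) (N : ℕ) (A : Fin N → Set X) (φ : Fin N → X → X)
    (lam : NNReal) (hlam0 : 0 < lam) (hlam : lam < 1)
    (hopen : ∀ i, IsOpen (A i))
    (hconn : ∀ i, IsConnected (A i))
    (hdisj : ∀ i j, i ≠ j → Disjoint (A i) (A j))
    (hdense : Dense (⋃ i, A i))
    (hlip : ∀ i, LipschitzWith lam (φ i))
    (hbilip : ∀ i, ∃ K : NNReal, AntilipschitzWith K (φ i))
    (heq : ∀ i, Set.EqOn f (φ i) (A i))
    (x₀ : X)
    (hΩS : OmegaIFS f A φ x₀ ∩ (⋃ i, A i)ᶜ = ∅) :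
    ∃ (r : ℕ) (γ : Fin r → Set X),
      (∀ k, IsPeriodicOrbit f (γ k)) ∧
      (⋃ x ∈ {x : X | ∀ m : ℕ, f^[m] x ∈ ⋃ i, A i}, omegaSet f x) = ⋃ k, γ k := by
  classical
  -- basic real facts about lam
  have hlamR : (lam : ℝ) < 1 := hlam
  have hlam0R : (0 : ℝ) ≤ (lam : ℝ) := lam.coe_nonneg
  set Z : Set X := {x : X | ∀ m : ℕ, f^[m] x ∈ ⋃ i, A i} with hZdef
  set U : ℕ → Set X := fun m => closure (⋃ n ∈ Set.Ici m,
    ⋃ α ∈ {α : ℕ → Fin N | ∃ x, ∀ j < n, f^[j] x ∈ A (α j)},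
      ({compIFS φ α n x₀} : Set X)) with hUdef
  have hΩU : OmegaIFS f A φ x₀ = ⋂ m, U m := rfl
  set Ω : Set X := ⋂ m, U m with hΩdef
  have hUclosed : ∀ m, IsClosed (U m) := fun m => isClosed_closure
  have hUcompact : ∀ m, IsCompact (U m) := fun m => (hUclosed m).isCompact
  have hUanti : ∀ {m m' : ℕ}, m ≤ m' → U m' ⊆ U m := by
    intro m m' h
    apply closure_mono
    exact Set.biUnion_subset_biUnion_left (fun n hn => le_trans h hn)
  have hΩclosed : IsClosed Ω := isClosed_iInter fun m => hUclosed m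
  have hΩcompact : IsCompact Ω := hΩclosed.isCompact
  have hΩA : Ω ⊆ ⋃ i, A i := by
    intro z hz
    by_contra h
    have : z ∈ OmegaIFS f A φ x₀ ∩ (⋃ i, A i)ᶜ := ⟨hΩU ▸ hz, h⟩
    rw [hΩS] at this
    exact this
  obtain ⟨δ₄, hδ₄pos, hLeb⟩ : ∃ δ₄ > 0, ∀ z ∈ Ω, ∃ i, ball z δ₄ ⊆ A i :=
    lebesgue_number_lemma_of_metric hΩcompact hopen hΩA
  set δ : ℝ := δ₄ / 4 with hδdef
  have hδpos : 0 < δ := by positivity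
  -- itineraries of regular points
  have hitin : ∀ x ∈ Z, ∃ α : ℕ → Fin N, ∀ j, f^[j] x ∈ A (α j) := by
    intro x hx
    choose α hα using fun j => Set.mem_iUnion.mp (hx j)
    exact ⟨α, hα⟩
  -- the coded orbit of x₀ lies in all the U m
  have hcU : ∀ (α : ℕ → Fin N) (x : X), (∀ j, f^[j] x ∈ A (α j)) →
      ∀ m n, m ≤ n → compIFS φ α n x₀ ∈ U m := by
    intro α x hα m n hmn
    apply subset_closure
    refine Set.mem_biUnion hmn ?_
    refine Set.mem_biUnion ?_ rfl
    exact ⟨x, fun j _ => hα j⟩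
  -- U m eventually inside any thickening of Ω
  have hU_thick : ∀ ε : ℝ, 0 < ε → ∃ m, U m ⊆ Metric.thickening ε Ω := by
    intro ε hε
    have hKcomp : IsCompact (U 0 ∩ (Metric.thickening ε Ω)ᶜ) :=
      ((hUclosed 0).inter (Metric.isOpen_thickening).isClosed_compl).isCompact
    have hKcover : U 0 ∩ (Metric.thickening ε Ω)ᶜ ⊆ ⋃ m, (U m)ᶜ := by
      rintro y ⟨hy0, hyth⟩
      rw [Set.mem_iUnion]
      by_contra h
      push_neg at h
      have hyΩ : y ∈ Ω := Set.mem_iInter.mpr fun m => not_not.mp fun hc => h m (by simpa using hc)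
      exact hyth (Metric.self_subset_thickening hε Ω hyΩ)
    obtain ⟨s, hs⟩ := hKcomp.elim_finite_subcover (fun m => (U m)ᶜ)
      (fun m => (hUclosed m).isOpen_compl) hKcover
    refine ⟨s.sup id, fun y hy => ?_⟩
    by_contra hyth
    have hyK : y ∈ U 0 ∩ (Metric.thickening ε Ω)ᶜ := ⟨hUanti (Nat.zero_le _) hy, hyth⟩
    obtain ⟨m, hms, hym⟩ := Set.mem_iUnion₂.mp (hs hyK)
    exact hym (hUanti (Finset.le_sup (f := id) hms) hy)
  -- the "good region" G
  set G : Set X := {z : X | Metric.infDist z Ω ≤ δ ∧ Ω.Nonempty} with hGdef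
  have hGclosed : IsClosed G := by
    by_cases hne : Ω.Nonempty
    · have : G = (fun z => Metric.infDist z Ω) ⁻¹' (Set.Iic δ) := by
        ext z; simp [hGdef, hne, Set.mem_preimage]
      rw [this]
      exact IsClosed.preimage (continuous_infDist_pt Ω) isClosed_Iic
    · have : G = ∅ := by
        ext z; simp [hGdef, hne]
      rw [this]; exact isClosed_empty
  have hDeep : ∀ z ∈ G, ∃ i, ball z (2 * δ) ⊆ A i := by
    rintro z ⟨hzd, hΩne⟩
    obtain ⟨w, hwΩ, hwd⟩ := hΩcompact.exists_infDist_eq_dist hΩne z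
    obtain ⟨i, hi⟩ := hLeb w hwΩ
    refine ⟨i, fun y hy => hi ?_⟩
    rw [mem_ball] at hy ⊢
    have h1 : dist y w ≤ dist y z + dist z w := dist_triangle y z w
    have h2 : dist z w ≤ δ := hwd ▸ hzd
    calc dist y w ≤ dist y z + dist z w := h1
      _ < 2 * δ + δ := by linarith
      _ < δ₄ := by rw [hδdef]; linarith
  -- one-step synchronization
  have hstep : ∀ z w : X, z ∈ G → dist z w < 2 * δ →
      dist (f z) (f w) ≤ (lam : ℝ) * dist z w := by
    intro z w hz hd
    obtain ⟨i, hi⟩ := hDeep z hz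
    have hz' : z ∈ A i := hi (mem_ball_self (by positivity))
    have hw' : w ∈ A i := hi (by rw [mem_ball, dist_comm]; exact hd)
    rw [heq i hz', heq i hw']
    exact (hlip i).dist_le_mul z w
  -- full synchronization
  have hsync : ∀ z w : X, (∀ n, f^[n] z ∈ G) → dist z w < 2 * δ →
      ∀ k, dist (f^[k] z) (f^[k] w) ≤ (lam : ℝ) ^ k * dist z w := by
    intro z w hz hd k
    induction k with
    | zero => simp
    | succ k ih =>
      have hle : dist (f^[k] z) (f^[k] w) < 2 * δ :=
        lt_of_le_of_lt
          (le_trans ih (mul_le_of_le_one_left dist_nonneg (pow_le_one₀ hlam0R hlamR.le))) hd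
      have hst := hstep _ _ (hz k) hle
      rw [Function.iterate_succ_apply', Function.iterate_succ_apply']
      calc dist (f (f^[k] z)) (f (f^[k] w)) ≤ (lam : ℝ) * dist (f^[k] z) (f^[k] w) := hst
        _ ≤ (lam : ℝ) * ((lam : ℝ) ^ k * dist z w) := mul_le_mul_of_nonneg_left ih hlam0R
        _ = (lam : ℝ) ^ (k+1) * dist z w := by ring
  -- rigidity of periodic points
  have hrigid : ∀ z w : X, (∀ n, f^[n] z ∈ G) →
      (∃ p, 0 < p ∧ f^[p] z = z) → (∃ q, 0 < q ∧ f^[q] w = w) →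
      dist z w < 2 * δ → z = w := by
    rintro z w hz ⟨p, hp, hpz⟩ ⟨q, hq, hqw⟩ hd
    by_contra hne
    have hd0 : 0 < dist z w := dist_pos.mpr hne
    have hzpq : f^[p * q] z = z := by
      rw [Function.iterate_mul]
      exact Function.iterate_fixed hpz q
    have hwpq : f^[p * q] w = w := by
      rw [mul_comm, Function.iterate_mul]
      exact Function.iterate_fixed hqw p
    have hb := hsync z w hz hd (p * q)
    rw [hzpq, hwpq] at hb
    have hlt : (lam : ℝ) ^ (p * q) * dist z w < 1 * dist z w := by
      apply mul_lt_mul_of_pos_right _ hd0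
      exact pow_lt_one₀ hlam0R hlamR (by positivity)
    rw [one_mul] at hlt
    exact absurd (lt_of_le_of_lt hb hlt) (lt_irrefl _)
  -- orbit tails of regular points lie in G
  have htail : ∀ x ∈ Z, ∃ M, ∀ n, M ≤ n → f^[n] x ∈ G := by
    intro x hx
    obtain ⟨α, hα⟩ := hitin x hx
    obtain ⟨m₀, hm₀⟩ := hU_thick (δ / 2) (by positivity)
    have hgeom : Tendsto (fun n : ℕ => (lam : ℝ) ^ n * dist x x₀) atTop (nhds 0) := by
      have := (tendsto_pow_atTop_nhds_zero_of_lt_one hlam0R hlamR).mul_const (dist x x₀)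
      simpa using this
    obtain ⟨m₁, hm₁⟩ := (Filter.eventually_atTop).mp
      (hgeom.eventually_lt_const (by positivity : (0:ℝ) < δ / 2))
    refine ⟨max m₀ m₁, fun n hn => ?_⟩
    have hn₀ : m₀ ≤ n := le_trans (le_max_left _ _) hn
    have hn₁ : m₁ ≤ n := le_trans (le_max_right _ _) hn
    have hc : compIFS φ α n x₀ ∈ U m₀ := hcU α x hα m₀ n hn₀
    obtain ⟨w, hwΩ, hwd⟩ := Metric.mem_thickening_iff.mp (hm₀ hc)
    have hdo : dist (f^[n] x) (compIFS φ α n x₀) ≤ (lam : ℝ) ^ n * dist x x₀ := by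
      rw [iterate_eq_compIFS heq hα n]
      exact dist_compIFS_le hlip α n x x₀
    have hdo' : dist (f^[n] x) (compIFS φ α n x₀) < δ / 2 := lt_of_le_of_lt hdo (hm₁ n hn₁)
    refine ⟨?_, ⟨w, hwΩ⟩⟩
    have : dist (f^[n] x) w < δ := by
      calc dist (f^[n] x) w ≤ dist (f^[n] x) (compIFS φ α n x₀) + dist (compIFS φ α n x₀) w :=
            dist_triangle _ _ _
        _ < δ / 2 + δ / 2 := by exact add_lt_add hdo' hwd
        _ = δ := by ring
    exact le_trans (Metric.infDist_le_dist_of_mem hwΩ) this.le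
  -- characterization of the omega limit set
  have homega_mem : ∀ x z : X, z ∈ omegaSet f x ↔
      ∀ m : ℕ, ∀ ε : ℝ, 0 < ε → ∃ n, m ≤ n ∧ dist (f^[n] x) z < ε := by
    intro x z
    simp only [omegaSet, Set.mem_iInter, Metric.mem_closure_iff]
    constructor
    · intro h m ε hε
      obtain ⟨b, hb, hbd⟩ := h m ε hε
      simp only [Set.mem_iUnion, Set.mem_Ici, Set.mem_singleton_iff] at hb
      obtain ⟨n, hn, rfl⟩ := hb
      exact ⟨n, hn, by rwa [dist_comm]⟩
    · intro h m ε hε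
      obtain ⟨n, hn, hd⟩ := h m ε hε
      refine ⟨f^[n] x, ?_, by rwa [dist_comm]⟩
      simp only [Set.mem_iUnion, Set.mem_Ici, Set.mem_singleton_iff]
      exact ⟨n, hn, rfl⟩
  have homega_closed : ∀ x : X, IsClosed (omegaSet f x) :=
    fun x => isClosed_iInter fun m => isClosed_closure
  -- omega limit sets of regular points lie in G
  have homegaG : ∀ x ∈ Z, omegaSet f x ⊆ G := by
    intro x hx z hz
    obtain ⟨M, hM⟩ := htail x hx
    have hz' : z ∈ closure (⋃ n ∈ Set.Ici M, ({f^[n] x} : Set X)) := by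
      have := Set.mem_iInter.mp hz M
      exact this
    have hsub : (⋃ n ∈ Set.Ici M, ({f^[n] x} : Set X)) ⊆ G := by
      intro y hy
      simp only [Set.mem_iUnion, Set.mem_Ici, Set.mem_singleton_iff] at hy
      obtain ⟨n, hn, rfl⟩ := hy
      exact hM n hn
    exact hGclosed.closure_subset_iff.mpr hsub hz'
  -- omega limit sets are nonempty
  have homega_ne : ∀ x : X, (omegaSet f x).Nonempty := by
    intro x
    apply IsCompact.nonempty_iInter_of_sequence_nonempty_isCompact_isClosed
    · intro i
      apply closure_mono
      exact Set.biUnion_subset_biUnion_left fun n hn => le_trans (Nat.le_succ i) hn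
    · intro i
      exact ⟨f^[i] x, subset_closure (Set.mem_biUnion (Set.mem_Ici.mpr le_rfl) rfl)⟩
    · exact isClosed_closure.isCompact
    · exact fun i => isClosed_closure
  -- forward invariance of omega limit sets
  have hfwd : ∀ x ∈ Z, ∀ z ∈ omegaSet f x, ∀ n, f^[n] z ∈ omegaSet f x := by
    intro x hx z hz n
    induction n with
    | zero => simpa using hz
    | succ n ih =>
      rw [Function.iterate_succ_apply']
      set w := f^[n] z with hwdef
      have hwG : w ∈ G := homegaG x hx ih
      rw [homega_mem]
      intro m ε hε
      obtain ⟨n', hn', hd⟩ := (homega_mem x w).mp ih m (min ε (2 * δ)) (by positivity)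
      have hd2 : dist (f^[n'] x) w < 2 * δ := lt_of_lt_of_le hd (min_le_right _ _)
      have hdε : dist (f^[n'] x) w < ε := lt_of_lt_of_le hd (min_le_left _ _)
      refine ⟨n' + 1, le_trans hn' (Nat.le_succ n'), ?_⟩
      rw [Function.iterate_succ_apply']
      have := hstep w (f^[n'] x) hwG (by rwa [dist_comm])
      rw [dist_comm]
      calc dist (f w) (f (f^[n'] x)) ≤ (lam : ℝ) * dist w (f^[n'] x) := this
        _ ≤ 1 * dist w (f^[n'] x) := by
            apply mul_le_mul_of_nonneg_right hlamR.le dist_nonneg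
        _ < ε := by rw [one_mul, dist_comm]; exact hdε
  have hGood : ∀ x ∈ Z, ∀ z ∈ omegaSet f x, ∀ n, f^[n] z ∈ G :=
    fun x hx z hz n => homegaG x hx (hfwd x hx z hz n)
  -- MAIN: each omega limit set of a regular point is a single periodic orbit
  have hmain : ∀ x ∈ Z, ∃ w : X, (∀ n, f^[n] w ∈ G) ∧ (∃ T, 0 < T ∧ f^[T] w = w) ∧
      omegaSet f x = {y | ∃ n : ℕ, f^[n] w = y} := by
    intro x hx
    obtain ⟨M, hM⟩ := htail x hx
    obtain ⟨z, hz⟩ := homega_ne x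
    have hzmem := (homega_mem x z).mp hz
    have hzG : ∀ n, f^[n] z ∈ G := hGood x hx z hz
    set ε : ℝ := δ * (1 - (lam : ℝ)) / 2 with hεdef
    have hεpos : 0 < ε := by
      rw [hεdef]
      have : 0 < 1 - (lam : ℝ) := by linarith
      positivity
    have hε2δ : ε < 2 * δ := by
      rw [hεdef]; nlinarith
    obtain ⟨n₁, hn₁M, hn₁⟩ := hzmem M ε hεpos
    obtain ⟨n₂, hn₂M, hn₂⟩ := hzmem (n₁ + 1) ε hεpos
    set T : ℕ := n₂ - n₁ with hTdef
    have hn₁lt : n₁ < n₂ := lt_of_lt_of_le (Nat.lt_succ_self n₁) hn₂M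
    have hTpos : 0 < T := Nat.sub_pos_of_lt hn₁lt
    have hn₂eq : T + n₁ = n₂ := Nat.sub_add_cancel hn₁lt.le
    -- synchronized bounds
    have d1 : ∀ k, dist (f^[k] z) (f^[k] (f^[n₁] x)) ≤ (lam : ℝ) ^ k * ε := by
      intro k
      have h := hsync z (f^[n₁] x) hzG (by rw [dist_comm]; exact lt_trans hn₁ hε2δ) k
      refine le_trans h ?_
      apply mul_le_mul_of_nonneg_left _ (pow_nonneg hlam0R k)
      rw [dist_comm]; exact hn₁.le
    have d2 : ∀ k, dist (f^[k] z) (f^[k] (f^[n₂] x)) ≤ (lam : ℝ) ^ k * ε := by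
      intro k
      have h := hsync z (f^[n₂] x) hzG (by rw [dist_comm]; exact lt_trans hn₂ hε2δ) k
      refine le_trans h ?_
      apply mul_le_mul_of_nonneg_left _ (pow_nonneg hlam0R k)
      rw [dist_comm]; exact hn₂.le
    have hy₂ : ∀ k, f^[k] (f^[n₂] x) = f^[k + T] (f^[n₁] x) := by
      intro k
      rw [← Function.iterate_add_apply, ← Function.iterate_add_apply]
      congr 1
      omega
    have hTT : ∀ k, dist (f^[k] z) (f^[k + T] z) ≤ 2 * ε * (lam : ℝ) ^ k := by
      intro k
      have h1 : dist (f^[k] z) (f^[k] (f^[n₂] x)) ≤ (lam : ℝ) ^ k * ε := d2 k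
      have h2 : dist (f^[k + T] z) (f^[k + T] (f^[n₁] x)) ≤ (lam : ℝ) ^ (k + T) * ε := d1 (k + T)
      have h3 : (lam : ℝ) ^ (k + T) ≤ (lam : ℝ) ^ k :=
        pow_le_pow_of_le_one hlam0R hlamR.le (Nat.le_add_right k T)
      calc dist (f^[k] z) (f^[k + T] z)
          ≤ dist (f^[k] z) (f^[k] (f^[n₂] x)) + dist (f^[k] (f^[n₂] x)) (f^[k + T] z) :=
            dist_triangle _ _ _
        _ = dist (f^[k] z) (f^[k] (f^[n₂] x)) + dist (f^[k + T] z) (f^[k + T] (f^[n₁] x)) := by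
            rw [hy₂ k, dist_comm (f^[k + T] (f^[n₁] x))]
        _ ≤ (lam : ℝ) ^ k * ε + (lam : ℝ) ^ (k + T) * ε := add_le_add h1 h2
        _ ≤ (lam : ℝ) ^ k * ε + (lam : ℝ) ^ k * ε := by
            apply add_le_add_right
            exact mul_le_mul_of_nonneg_right h3 hεpos.le
        _ = 2 * ε * (lam : ℝ) ^ k := by ring
    -- the Cauchy sequence u j = f^[T * j] z
    set u : ℕ → X := fun j => f^[T * j] z with hudef
    have hrT : (lam : ℝ) ^ T < 1 := pow_lt_one₀ hlam0R hlamR hTpos.ne'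
    have hrT0 : 0 ≤ (lam : ℝ) ^ T := pow_nonneg hlam0R T
    have h1T : 0 < 1 - (lam : ℝ) ^ T := by linarith
    have hubound : ∀ j, dist (u j) (u (j + 1)) ≤ 2 * ε * ((lam : ℝ) ^ T) ^ j := by
      intro j
      have he : T * (j + 1) = T * j + T := by ring
      have hthis : dist (u j) (u (j + 1)) = dist (f^[T * j] z) (f^[T * j + T] z) := by
        simp only [hudef, he]
      rw [hthis]
      calc dist (u j) (f^[T * j + T] z) ≤ 2 * ε * (lam : ℝ) ^ (T * j) := hTT (T * j)
        _ = 2 * ε * ((lam : ℝ) ^ T) ^ j := by rw [← pow_mul]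
    have hcauchy : CauchySeq u := cauchySeq_of_le_geometric _ _ hrT hubound
    obtain ⟨w, hwlim⟩ := cauchySeq_tendsto_of_complete hcauchy
    have hdistw : ∀ j, dist (u j) w ≤ 2 * ε * ((lam : ℝ) ^ T) ^ j / (1 - (lam : ℝ) ^ T) :=
      dist_le_of_le_geometric_of_tendsto _ _ hrT hubound hwlim
    have hBle : ∀ j, 2 * ε * ((lam : ℝ) ^ T) ^ j / (1 - (lam : ℝ) ^ T) ≤ δ := by
      intro j
      rw [div_le_iff₀ h1T]
      have hj1 : ((lam : ℝ) ^ T) ^ j ≤ 1 := pow_le_one₀ hrT0 hrT.le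
      have hTlam : (lam : ℝ) ^ T ≤ (lam : ℝ) := by
        calc (lam : ℝ) ^ T ≤ (lam : ℝ) ^ 1 := pow_le_pow_of_le_one hlam0R hlamR.le hTpos
          _ = (lam : ℝ) := pow_one _
      have h2ε : 2 * ε = δ * (1 - (lam : ℝ)) := by rw [hεdef]; ring
      nlinarith [hεpos.le, hδpos.le]
    have hdistw' : ∀ j, dist (u j) w ≤ δ := fun j => le_trans (hdistw j) (hBle j)
    -- u j lies in the omega limit set, hence so does w
    have huω : ∀ j, u j ∈ omegaSet f x := fun j => hfwd x hx z hz (T * j)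
    have hwω : w ∈ omegaSet f x :=
      (homega_closed x).mem_of_tendsto hwlim (Filter.Eventually.of_forall huω)
    have hwG : ∀ n, f^[n] w ∈ G := hGood x hx w hwω
    -- w is periodic of period T
    have hwTu : ∀ j, f^[T] (u j) = u (j + 1) := by
      intro j
      rw [hudef]
      show f^[T] (f^[T * j] z) = f^[T * (j + 1)] z
      rw [← Function.iterate_add_apply]
      congr 1
      ring
    have hwper : f^[T] w = w := by
      rw [← dist_eq_zero]
      have hb : ∀ j : ℕ, dist (f^[T] w) w ≤
          2 * (2 * ε * ((lam : ℝ) ^ T) ^ j / (1 - (lam : ℝ) ^ T)) := by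
        intro j
        have hdj : dist w (u j) < 2 * δ := by
          rw [dist_comm]
          exact lt_of_le_of_lt (hdistw' j) (by linarith)
        have hs := hsync w (u j) hwG hdj T
        have hs' : dist (f^[T] w) (f^[T] (u j)) ≤ dist (u j) w := by
          refine le_trans hs ?_
          rw [dist_comm]
          exact mul_le_of_le_one_left dist_nonneg (pow_le_one₀ hlam0R hlamR.le)
        calc dist (f^[T] w) w ≤ dist (f^[T] w) (f^[T] (u j)) + dist (f^[T] (u j)) w :=
              dist_triangle _ _ _
          _ ≤ dist (u j) w + dist (f^[T] (u j)) w := add_le_add_left hs' _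
          _ = dist (u j) w + dist (u (j + 1)) w := by rw [hwTu j]
          _ ≤ 2 * ε * ((lam : ℝ) ^ T) ^ j / (1 - (lam : ℝ) ^ T)
              + 2 * ε * ((lam : ℝ) ^ T) ^ (j + 1) / (1 - (lam : ℝ) ^ T) :=
              add_le_add (hdistw j) (hdistw (j + 1))
          _ ≤ 2 * (2 * ε * ((lam : ℝ) ^ T) ^ j / (1 - (lam : ℝ) ^ T)) := by
              have : ((lam : ℝ) ^ T) ^ (j + 1) ≤ ((lam : ℝ) ^ T) ^ j :=
                pow_le_pow_of_le_one hrT0 hrT.le (Nat.le_succ j)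
              have h2 : 2 * ε * ((lam : ℝ) ^ T) ^ (j + 1) / (1 - (lam : ℝ) ^ T)
                  ≤ 2 * ε * ((lam : ℝ) ^ T) ^ j / (1 - (lam : ℝ) ^ T) := by
                rw [div_le_div_iff_of_pos_right h1T]
                exact mul_le_mul_of_nonneg_left this (by positivity)
              linarith
      have htend : Tendsto (fun j : ℕ =>
          2 * (2 * ε * ((lam : ℝ) ^ T) ^ j / (1 - (lam : ℝ) ^ T))) atTop (nhds 0) := by
        have h0 : Tendsto (fun j : ℕ => ((lam : ℝ) ^ T) ^ j) atTop (nhds 0) :=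
          tendsto_pow_atTop_nhds_zero_of_lt_one hrT0 hrT
        have := ((h0.const_mul (2 * ε)).div_const (1 - (lam : ℝ) ^ T)).const_mul 2
        simpa using this
      have := ge_of_tendsto' htend hb
      exact le_antisymm this dist_nonneg
    refine ⟨w, hwG, ⟨T, hTpos, hwper⟩, ?_⟩
    -- the orbit of w reduces to the finite cycle
    have hcyc : ∀ n : ℕ, ∃ s, s < T ∧ f^[n] w = f^[s] w := by
      intro n
      refine ⟨n % T, Nat.mod_lt n hTpos, ?_⟩
      conv_lhs => rw [← Nat.div_add_mod n T]
      rw [add_comm, Function.iterate_add_apply]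
      congr 1
      rw [Function.iterate_mul]
      exact Function.iterate_fixed hwper (n / T)
    apply Set.Subset.antisymm
    · -- hard inclusion: omega set ⊆ orbit of w
      intro z' hz'
      by_contra hz'o
      simp only [Set.mem_setOf_eq] at hz'o
      push_neg at hz'o
      have hrange : (Finset.range T).Nonempty := ⟨0, Finset.mem_range.mpr hTpos⟩
      set η := (Finset.range T).inf' hrange (fun s => dist z' (f^[s] w)) with hηdef
      have hηpos : 0 < η := by
        rw [hηdef, Finset.lt_inf'_iff]
        intro s _
        exact dist_pos.mpr (fun hc => hz'o s hc.symm)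
      have hηle : ∀ s, s < T → η ≤ dist z' (f^[s] w) := by
        intro s hs
        exact Finset.inf'_le _ (Finset.mem_range.mpr hs)
      -- choose j₀ with tail bound small
      have htendB : Tendsto (fun j : ℕ =>
          2 * ε * ((lam : ℝ) ^ T) ^ j / (1 - (lam : ℝ) ^ T)) atTop (nhds 0) := by
        have h0 : Tendsto (fun j : ℕ => ((lam : ℝ) ^ T) ^ j) atTop (nhds 0) :=
          tendsto_pow_atTop_nhds_zero_of_lt_one hrT0 hrT
        have := (h0.const_mul (2 * ε)).div_const (1 - (lam : ℝ) ^ T)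
        simpa using this
      obtain ⟨J, hJ⟩ := (Filter.eventually_atTop).mp
        (htendB.eventually_lt_const (by positivity : (0:ℝ) < η / 3))
      have htendk : Tendsto (fun k : ℕ => (lam : ℝ) ^ k * ε) atTop (nhds 0) := by
        have := (tendsto_pow_atTop_nhds_zero_of_lt_one hlam0R hlamR).mul_const ε
        simpa using this
      obtain ⟨K, hK⟩ := (Filter.eventually_atTop).mp
        (htendk.eventually_lt_const (by positivity : (0:ℝ) < η / 3))
      -- choose n approximating z' far out
      obtain ⟨n, hn, hnz'⟩ := (homega_mem x z').mp hz' (n₁ + max K (T * (J + 1))) (η / 3)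
        (by positivity)
      set k : ℕ := n - n₁ with hkdef
      have hmax1 : K ≤ max K (T * (J + 1)) := le_max_left _ _
      have hmax2 : T * (J + 1) ≤ max K (T * (J + 1)) := le_max_right _ _
      have hkK : K ≤ k := by omega
      have hkT : T * (J + 1) ≤ k := by omega
      have hnk : n = k + n₁ := by omega
      set s : ℕ := k % T with hsdef
      set j : ℕ := k / T with hjdef
      have hsT : s < T := Nat.mod_lt k hTpos
      have hjJ : J ≤ j := by
        rw [hjdef]
        rw [Nat.le_div_iff_mul_le hTpos]
        calc J * T ≤ (J + 1) * T := by
              exact Nat.mul_le_mul_right T (Nat.le_succ J)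
          _ = T * (J + 1) := by ring
          _ ≤ k := hkT
      -- distance from f^[n] x to f^[s] w
      have hxk : f^[n] x = f^[k] (f^[n₁] x) := by
        rw [hnk, Function.iterate_add_apply]
      have hkst : k = s + T * j := by
        rw [hsdef, hjdef]
        exact (Nat.mod_add_div k T).symm
      have hfkz : f^[k] z = f^[s] (u j) := by
        rw [hudef]
        show f^[k] z = f^[s] (f^[T * j] z)
        rw [← Function.iterate_add_apply, ← hkst]
      have hbound1 : dist (f^[n] x) (f^[k] z) ≤ (lam : ℝ) ^ k * ε := by
        rw [hxk, dist_comm]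
        exact d1 k
      have hbound1' : dist (f^[n] x) (f^[k] z) < η / 3 := by
        refine lt_of_le_of_lt hbound1 ?_
        calc (lam : ℝ) ^ k * ε ≤ (lam : ℝ) ^ K * ε := by
              apply mul_le_mul_of_nonneg_right _ hεpos.le
              exact pow_le_pow_of_le_one hlam0R hlamR.le hkK
          _ < η / 3 := hK K le_rfl
      have hbound2 : dist (f^[k] z) (f^[s] w) < η / 3 := by
        rw [hfkz]
        have hdj : dist w (u j) < 2 * δ := by
          rw [dist_comm]
          exact lt_of_le_of_lt (hdistw' j) (by linarith)
        have hs2 := hsync w (u j) hwG hdj s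
        have hs3 : dist (f^[s] (u j)) (f^[s] w) ≤ dist (u j) w := by
          rw [dist_comm]
          refine le_trans hs2 ?_
          rw [dist_comm]
          exact mul_le_of_le_one_left dist_nonneg (pow_le_one₀ hlam0R hlamR.le)
        refine lt_of_le_of_lt (le_trans hs3 (hdistw j)) ?_
        calc 2 * ε * ((lam : ℝ) ^ T) ^ j / (1 - (lam : ℝ) ^ T)
            ≤ 2 * ε * ((lam : ℝ) ^ T) ^ J / (1 - (lam : ℝ) ^ T) := by
              rw [div_le_div_iff_of_pos_right h1T]
              apply mul_le_mul_of_nonneg_left _ (by positivity)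
              exact pow_le_pow_of_le_one hrT0 hrT.le hjJ
          _ < η / 3 := hJ J le_rfl
      have : η ≤ dist z' (f^[s] w) := hηle s hsT
      have hcontr : dist z' (f^[s] w) < η := by
        calc dist z' (f^[s] w) ≤ dist z' (f^[n] x) + dist (f^[n] x) (f^[s] w) :=
              dist_triangle _ _ _
          _ ≤ dist z' (f^[n] x) + (dist (f^[n] x) (f^[k] z) + dist (f^[k] z) (f^[s] w)) := by
              exact add_le_add_right (dist_triangle _ _ _) _
          _ < η / 3 + (η / 3 + η / 3) := by
              apply add_lt_add _ (add_lt_add hbound1' hbound2)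
              rw [dist_comm]; exact hnz'
          _ = η := by ring
      linarith
    · -- easy inclusion: orbit of w ⊆ omega set
      rintro y ⟨n, rfl⟩
      exact hfwd x hx w hwω n
  -- assemble: the union of all omega limit sets is finite and orbit-saturated
  set S : Set X := ⋃ x ∈ Z, omegaSet f x with hSdef
  set PP : Set X := {z : X | (∀ n, f^[n] z ∈ G) ∧ ∃ p, 0 < p ∧ f^[p] z = z} with hPPdef
  have hSPP : S ⊆ PP := by
    intro z hz
    simp only [hSdef, Set.mem_iUnion] at hz
    obtain ⟨x, hx, hzx⟩ := hz
    obtain ⟨w, hwG, ⟨T, hT, hTw⟩, hωeq⟩ := hmain x hx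
    rw [hωeq] at hzx
    obtain ⟨s, rfl⟩ := hzx
    constructor
    · intro n
      rw [← Function.iterate_add_apply]
      exact hwG (n + s)
    · refine ⟨T, hT, ?_⟩
      rw [← Function.iterate_add_apply, add_comm, Function.iterate_add_apply, hTw]
  have hPPfin : PP.Finite := by
    obtain ⟨t, _, htfin, htcov⟩ := finite_cover_balls_of_compact (isCompact_univ (X := X)) hδpos
    have hPPsub : PP ⊆ ⋃ c ∈ t, PP ∩ ball c δ := by
      intro z hzP
      obtain ⟨c, hct, hzc⟩ := Set.mem_iUnion₂.mp (htcov (Set.mem_univ z))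
      exact Set.mem_biUnion hct ⟨hzP, hzc⟩
    refine Set.Finite.subset (Set.Finite.biUnion htfin fun c _ => ?_) hPPsub
    apply Set.Subsingleton.finite
    rintro z ⟨⟨hzG, hzp⟩, hzc⟩ y ⟨⟨hyG, hyp⟩, hyc⟩
    apply hrigid z y hzG hzp hyp
    calc dist z y ≤ dist z c + dist c y := dist_triangle _ _ _
      _ < δ + δ := by
          refine add_lt_add (mem_ball.mp hzc) ?_
          rw [dist_comm]; exact mem_ball.mp hyc
      _ = 2 * δ := by ring
  have hSfin : S.Finite := hPPfin.subset hSPP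
  -- S is saturated under orbits
  have hsat : ∀ z ∈ S, {y : X | ∃ n : ℕ, f^[n] z = y} ⊆ S := by
    intro z hz
    simp only [hSdef, Set.mem_iUnion] at hz
    obtain ⟨x, hx, hzx⟩ := hz
    obtain ⟨w, hwG, ⟨T, hT, hTw⟩, hωeq⟩ := hmain x hx
    rintro y ⟨n, rfl⟩
    simp only [hSdef, Set.mem_iUnion]
    refine ⟨x, hx, ?_⟩
    rw [hωeq] at hzx ⊢
    obtain ⟨s, rfl⟩ := hzx
    exact ⟨n + s, Function.iterate_add_apply f n s w⟩
  -- enumerate S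
  refine ⟨hSfin.toFinset.card,
    fun k => {y : X | ∃ n : ℕ, f^[n] ((hSfin.toFinset.equivFin.symm k : X)) = y}, ?_, ?_⟩
  · intro k
    have hmem : ((hSfin.toFinset.equivFin.symm k : X)) ∈ S :=
      Set.Finite.mem_toFinset hSfin |>.mp (hSfin.toFinset.equivFin.symm k).2
    obtain ⟨hG', p, hp, hper⟩ := hSPP hmem
    exact ⟨_, p, hp, hper, rfl⟩
  · apply Set.Subset.antisymm
    · intro z hz
      have hzF : z ∈ hSfin.toFinset := (Set.Finite.mem_toFinset hSfin).mpr hz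
      rw [Set.mem_iUnion]
      refine ⟨hSfin.toFinset.equivFin ⟨z, hzF⟩, 0, ?_⟩
      simp
    · intro y hy
      rw [Set.mem_iUnion] at hy
      obtain ⟨k, n, rfl⟩ := hy
      have hmem : ((hSfin.toFinset.equivFin.symm k : X)) ∈ S :=
        Set.Finite.mem_toFinset hSfin |>.mp (hSfin.toFinset.equivFin.symm k).2
      exact hsat _ hmem ⟨n, rfl⟩
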